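/- Let h(z) = Σ_{n≥1} a_n z^n and g(z) = Σ_{n≥1} b_n z^n be holomorphic on the unit disk D with ||a_1| − |b_1|| ≥ 1/√(K+K'), and suppose |h'(z)| + |g'(z)| ≤ Λ₁ for all z ∈ D, where Λ₁ ≥ √(K+K') ≥ 1. Then for each n ≥ 2, |a_n| + |b_n| ≤ ((K+K')Λ₁² − 1)/(n(K+K')Λ₁). -/

import Mathlib

open Metric Complex

noncomputable def Complex.abs : AbsoluteValue ℂ ℝ where
  toFun z := ‖z‖
  map_mul' := norm_mul
  nonneg' := norm_nonneg
  eq_zero' _ := norm_eq_zero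
  add_le' := norm_add_le

namespace Complex
theorem norm_eq_abs (z : ℂ) : ‖z‖ = Complex.abs z := rfl
@[simp] theorem abs_ofReal (r : ℝ) : Complex.abs (r : ℂ) = |r| :=
  (Complex.norm_real r).trans (Real.norm_eq_abs r)
theorem abs_apply (z : ℂ) : Complex.abs z = Real.sqrt (normSq z) := Complex.norm_def z
@[simp] theorem abs_conj (z : ℂ) : Complex.abs ((starRingEnd ℂ) z) = Complex.abs z :=
  Complex.norm_conj z
@[simp] theorem abs_natCast (n : ℕ) : Complex.abs (n : ℂ) = n := Complex.norm_natCast n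
theorem sq_abs (z : ℂ) : Complex.abs z ^ 2 = normSq z := Complex.sq_norm z
theorem normSq_eq_abs (z : ℂ) : normSq z = Complex.abs z ^ 2 := (Complex.sq_norm z).symm
end Complex

namespace Stmt10Aux

noncomputable def psum (e : ℕ → ℂ) : ℂ → ℂ := fun w => ∑' n, e n * w ^ n

def Bnd (e : ℕ → ℂ) : Prop :=
  ∀ r : ℝ, 0 ≤ r → r < 1 → ∃ M : ℝ, ∀ n, Complex.abs (e n) * r ^ n ≤ M

lemma bnd_of_hasSum {e : ℕ → ℂ}
    (hs : ∀ z ∈ ball (0 : ℂ) 1, ∃ S, HasSum (fun n => e n * z ^ n) S) : Bnd e := by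
  intro r hr0 hr1
  have hz : (r : ℂ) ∈ ball (0 : ℂ) 1 := by
    rw [mem_ball_zero_iff, Complex.norm_eq_abs, Complex.abs_ofReal, _root_.abs_of_nonneg hr0]
    exact hr1
  obtain ⟨S, hS⟩ := hs _ hz
  have h1 : Filter.Tendsto (fun n => ‖e n * (r : ℂ) ^ n‖) Filter.atTop (nhds 0) := by
    simpa using hS.summable.tendsto_atTop_zero.norm
  obtain ⟨M, hM⟩ := h1.bddAbove_range
  refine ⟨M, fun n => ?_⟩
  have : ‖e n * (r : ℂ) ^ n‖ ≤ M := hM ⟨n, rfl⟩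
  simpa [Complex.norm_eq_abs, map_mul, map_pow, Complex.abs_ofReal, _root_.abs_of_nonneg hr0] using this

lemma summable_aux {e : ℕ → ℂ} (hb : Bnd e) {r : ℝ} (hr0 : 0 ≤ r) (hr1 : r < 1) :
    Summable (fun n => Complex.abs (e n) * r ^ n) := by
  set ρ : ℝ := (1 + r) / 2 with hρ
  have hρ0 : 0 < ρ := by positivity
  have hρ1 : ρ < 1 := by simp only [hρ]; linarith
  have hrρ : r < ρ := by simp only [hρ]; linarith
  obtain ⟨M, hM⟩ := hb ρ hρ0.le hρ1
  have hq0 : 0 ≤ r / ρ := by positivity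
  have hq1 : r / ρ < 1 := (div_lt_one hρ0).2 hrρ
  have hgeo : Summable (fun n : ℕ => M * (r / ρ) ^ n) :=
    (summable_geometric_of_lt_one hq0 hq1).mul_left M
  refine Summable.of_nonneg_of_le (fun n => mul_nonneg (Complex.abs.nonneg _) (pow_nonneg hr0 n)) (fun n => ?_) hgeo
  have hrpow : r ^ n = ρ ^ n * (r / ρ) ^ n := by
    rw [← mul_pow]; congr 1; field_simp
  calc Complex.abs (e n) * r ^ n = Complex.abs (e n) * ρ ^ n * (r / ρ) ^ n := by
        rw [hrpow]; ring
    _ ≤ M * (r / ρ) ^ n := mul_le_mul_of_nonneg_right (hM n) (by positivity)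

lemma psum_hasSum {e : ℕ → ℂ} (hb : Bnd e) {z : ℂ} (hz : z ∈ ball (0 : ℂ) 1) :
    HasSum (fun n => e n * z ^ n) (psum e z) := by
  have hz1 : Complex.abs z < 1 := by rwa [mem_ball_zero_iff, Complex.norm_eq_abs] at hz
  have hsum : Summable (fun n => e n * z ^ n) := by
    refine Summable.of_norm ?_
    have := summable_aux hb (Complex.abs.nonneg z) hz1
    simpa [Complex.norm_eq_abs, map_mul, map_pow] using this
  exact hsum.hasSum

lemma psum_diff {e : ℕ → ℂ} (hb : Bnd e) :
    DifferentiableOn ℂ (psum e) (ball (0 : ℂ) 1) := by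
  intro z hz
  have hz1 : Complex.abs z < 1 := by rwa [mem_ball_zero_iff, Complex.norm_eq_abs] at hz
  set r : ℝ := (Complex.abs z + 1) / 2 with hr
  have hr0 : 0 ≤ r := by have := Complex.abs.nonneg z; positivity
  have hr1 : r < 1 := by simp only [hr]; linarith
  have hzr : Complex.abs z < r := by simp only [hr]; linarith
  have hD : DifferentiableOn ℂ (fun w : ℂ => ∑' n : ℕ, e n * w ^ n) (ball (0 : ℂ) r) := by
    refine differentiableOn_tsum_of_summable_norm (summable_aux hb hr0 hr1)
      (fun n => ((differentiable_const (e n)).mul (differentiable_pow n)).differentiableOn)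
      isOpen_ball (fun n w hw => ?_)
    have hw1 : Complex.abs w ≤ r := by
      rw [mem_ball_zero_iff, Complex.norm_eq_abs] at hw; exact hw.le
    calc ‖e n * w ^ n‖ = Complex.abs (e n) * Complex.abs w ^ n := by
          simp [Complex.norm_eq_abs, map_mul, map_pow]
      _ ≤ Complex.abs (e n) * r ^ n :=
          mul_le_mul_of_nonneg_left (pow_le_pow_left₀ (Complex.abs.nonneg w) hw1 n)
            (Complex.abs.nonneg _)
  exact (hD.differentiableAt (isOpen_ball.mem_nhds (by rwa [mem_ball_zero_iff,
    Complex.norm_eq_abs]))).differentiableWithinAt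

lemma psum_deriv {e : ℕ → ℂ} (hb : Bnd e) {z : ℂ} (hz : z ∈ ball (0 : ℂ) 1) :
    HasSum (fun k : ℕ => ((k : ℂ) + 1) * e (k + 1) * z ^ k) (deriv (psum e) z) := by
  have hz1 : Complex.abs z < 1 := by rwa [mem_ball_zero_iff, Complex.norm_eq_abs] at hz
  set r : ℝ := (Complex.abs z + 1) / 2 with hr
  have hr0 : 0 ≤ r := by have := Complex.abs.nonneg z; positivity
  have hr1 : r < 1 := by simp only [hr]; linarith
  have hzr : Complex.abs z < r := by simp only [hr]; linarith
  have hzr' : z ∈ ball (0 : ℂ) r := by rwa [mem_ball_zero_iff, Complex.norm_eq_abs]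
  have H := hasSum_deriv_of_summable_norm (F := fun (n : ℕ) (w : ℂ) => e n * w ^ n)
    (summable_aux hb hr0 hr1)
    (fun n => ((differentiable_const (e n)).mul (differentiable_pow n)).differentiableOn)
    isOpen_ball (fun n w hw => by
      have hw1 : Complex.abs w ≤ r := by
        rw [mem_ball_zero_iff, Complex.norm_eq_abs] at hw; exact hw.le
      calc ‖e n * w ^ n‖ = Complex.abs (e n) * Complex.abs w ^ n := by
            simp [Complex.norm_eq_abs, map_mul, map_pow]
        _ ≤ Complex.abs (e n) * r ^ n :=
            mul_le_mul_of_nonneg_left (pow_le_pow_left₀ (Complex.abs.nonneg w) hw1 n)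
              (Complex.abs.nonneg _)) hzr'
  have Hderiv : ∀ n : ℕ, deriv (fun w : ℂ => e n * w ^ n) z = e n * ((n : ℂ) * z ^ (n - 1)) := by
    intro n
    rw [deriv_const_mul _ (differentiableAt_pow n), deriv_pow_field]
  set f : ℕ → ℂ := fun n => e n * ((n : ℂ) * z ^ (n - 1)) with hf
  have H' : HasSum f (deriv (psum e) z) := by
    have heq : (fun n : ℕ => deriv (fun w : ℂ => e n * w ^ n) z) = f := funext Hderiv
    rw [← heq]; exact H
  have hf0 : f 0 = 0 := by simp [hf]
  have H2 : HasSum (fun n : ℕ => f (n + 1)) (deriv (psum e) z) := by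
    refine (hasSum_nat_add_iff 1).mpr ?_
    simpa [hf0] using H'
  have hfin : (fun n : ℕ => f (n + 1)) = fun k : ℕ => ((k : ℂ) + 1) * e (k + 1) * z ^ k := by
    funext k
    simp only [hf, Nat.add_sub_cancel, Nat.cast_add, Nat.cast_one]
    ring
  rw [← hfin]
  exact H2

lemma mobius_abs_le {d w : ℂ} (hd : Complex.abs d ≤ 1) (hw : Complex.abs w ≤ 1) :
    Complex.abs (d - w) ≤ Complex.abs (1 - (starRingEnd ℂ) d * w) := by
  have hkey : Complex.normSq (1 - (starRingEnd ℂ) d * w) - Complex.normSq (d - w)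
      = (1 - Complex.normSq d) * (1 - Complex.normSq w) := by
    simp only [Complex.normSq_apply, Complex.sub_re, Complex.sub_im, Complex.mul_re,
      Complex.mul_im, Complex.one_re, Complex.one_im, Complex.conj_re, Complex.conj_im]
    ring
  have hd2 : Complex.normSq d ≤ 1 := by
    rw [← Complex.sq_abs]; nlinarith [Complex.abs.nonneg d]
  have hw2 : Complex.normSq w ≤ 1 := by
    rw [← Complex.sq_abs]; nlinarith [Complex.abs.nonneg w]
  have h2 : Complex.normSq (d - w) ≤ Complex.normSq (1 - (starRingEnd ℂ) d * w) := by
    nlinarith [hkey]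
  rw [Complex.abs_apply, Complex.abs_apply]
  exact Real.sqrt_le_sqrt h2

lemma schwarz_pick (f : ℂ → ℂ) (hd : DifferentiableOn ℂ f (ball (0 : ℂ) 1))
    (hb : ∀ z ∈ ball (0 : ℂ) 1, Complex.abs (f z) ≤ 1) :
    Complex.abs (deriv f 0) ≤ 1 - Complex.abs (f 0) ^ 2 := by
  have h0 : (0 : ℂ) ∈ ball (0 : ℂ) 1 := mem_ball_self one_pos
  rcases lt_or_ge (Complex.abs (f 0)) 1 with hd1 | hd1
  · -- main case
    set d : ℂ := f 0 with hdd
    set σ : ℂ → ℂ := fun z => (d - f z) / (1 - (starRingEnd ℂ) d * f z) with hσ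
    have hden : ∀ z ∈ ball (0 : ℂ) 1, (1 : ℂ) - (starRingEnd ℂ) d * f z ≠ 0 := by
      intro z hz heq
      have h1 : (1 : ℂ) = (starRingEnd ℂ) d * f z := by
        rw [sub_eq_zero] at heq; exact heq
      have h2 : (1 : ℝ) = Complex.abs ((starRingEnd ℂ) d * f z) := by
        rw [← h1]; simp
      rw [map_mul, Complex.abs_conj] at h2
      nlinarith [hb z hz, Complex.abs.nonneg (f z), Complex.abs.nonneg d]
    have hσd : DifferentiableOn ℂ σ (ball (0 : ℂ) 1) :=
      ((differentiableOn_const d).sub hd).div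
        ((differentiableOn_const 1).sub ((differentiableOn_const _).mul hd)) hden
    have hσ0 : σ 0 = 0 := by simp [hσ, ← hdd]
    have hσb : ∀ z ∈ ball (0 : ℂ) 1, Complex.abs (σ z) ≤ 1 := by
      intro z hz
      rw [hσ]
      simp only [map_div₀]
      rw [div_le_one (by
        have := hden z hz
        have h3 := Complex.abs.pos this
        exact h3)]
      simpa using mobius_abs_le hd1.le (hb z hz)
    have hσder : Complex.abs (deriv σ 0) ≤ 1 := by
      refine le_of_forall_pos_le_add (fun ε hε => ?_)
      have hmaps : Set.MapsTo σ (ball (0 : ℂ) 1) (ball (σ 0) (1 + ε)) := by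
        intro z hz
        rw [mem_ball, hσ0, dist_zero_right, Complex.norm_eq_abs]
        exact lt_of_le_of_lt (hσb z hz) (by linarith)
      have := Complex.norm_deriv_le_div_of_mapsTo_ball hσd (hmaps.mono_right ball_subset_closedBall) one_pos
      simpa [Complex.norm_eq_abs] using this
    -- compute deriv σ 0
    have hfd : DifferentiableAt ℂ f 0 := hd.differentiableAt (isOpen_ball.mem_nhds h0)
    have hD0 : (1 : ℂ) - (starRingEnd ℂ) d * f 0 = ((1 - Complex.normSq d : ℝ) : ℂ) := by
      rw [← hdd, mul_comm, Complex.mul_conj]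
      push_cast
      ring
    have hD0' : (1 : ℂ) - (starRingEnd ℂ) d * f 0 ≠ 0 := hden 0 h0
    have hderσ : deriv σ 0 = -deriv f 0 / (1 - (starRingEnd ℂ) d * f 0) := by
      rw [hσ]
      rw [deriv_fun_div (c := fun z => d - f z) (d := fun z => 1 - (starRingEnd ℂ) d * f z)
        ((differentiableAt_const d).sub hfd)
        ((differentiableAt_const 1).sub ((differentiableAt_const _).mul hfd)) hD0']
      rw [deriv_const_sub, deriv_const_sub, deriv_const_mul _ hfd]
      rw [← hdd, sub_self, zero_mul, sub_zero]
      field_simp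
    have hsq : (0:ℝ) < 1 - Complex.normSq d := by
      rw [← Complex.sq_abs]; nlinarith [Complex.abs.nonneg d]
    have habsder : Complex.abs (deriv σ 0) = Complex.abs (deriv f 0) / (1 - Complex.normSq d) := by
      rw [hderσ, map_div₀, map_neg_eq_map, hD0, Complex.abs_ofReal, _root_.abs_of_pos hsq]
    rw [habsder, div_le_one hsq] at hσder
    rw [← hdd] at *
    calc Complex.abs (deriv f 0) ≤ 1 - Complex.normSq d := hσder
      _ = 1 - Complex.abs d ^ 2 := by rw [Complex.sq_abs]
  · -- |f 0| = 1 : f is constant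
    have habs1 : Complex.abs (f 0) = 1 := le_antisymm (hb 0 h0) hd1
    have hmax : IsMaxOn (norm ∘ f) (ball (0 : ℂ) 1) 0 := by
      intro z hz
      simp only [Function.comp_apply, Complex.norm_eq_abs, habs1]
      exact hb z hz
    have hconst : Set.EqOn f (Function.const ℂ (f 0)) (ball (0 : ℂ) 1) :=
      Complex.eqOn_of_isPreconnected_of_isMaxOn_norm (convex_ball _ _).isPreconnected
        isOpen_ball hd h0 hmax
    have hder0 : deriv f 0 = 0 := by
      have hev : f =ᶠ[nhds 0] Function.const ℂ (f 0) :=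
        Filter.eventuallyEq_of_mem (isOpen_ball.mem_nhds h0) hconst
      rw [hev.deriv_eq]; exact deriv_const _ _
    rw [hder0, habs1]
    simp

lemma wiener (φ : ℂ → ℂ) (d : ℕ → ℂ) (m : ℕ) (hm : 1 ≤ m)
    (hs : ∀ z ∈ ball (0 : ℂ) 1, HasSum (fun n : ℕ => d n * z ^ n) (φ z))
    (hb1 : ∀ z ∈ ball (0 : ℂ) 1, Complex.abs (φ z) ≤ 1) :
    Complex.abs (d m) ≤ 1 - Complex.abs (d 0) ^ 2 := by
  have h0 : (0 : ℂ) ∈ ball (0 : ℂ) 1 := mem_ball_self one_pos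
  set ζ : ℂ := Complex.exp (2 * Real.pi * Complex.I / m) with hζdef
  have hζ : IsPrimitiveRoot ζ m := Complex.isPrimitiveRoot_exp m (by omega)
  have hζ1 : Complex.abs ζ = 1 := by
    have hpow : Complex.abs ζ ^ m = 1 := by
      rw [← map_pow, hζ.pow_eq_one, map_one]
    rcases lt_trichotomy (Complex.abs ζ) 1 with hlt | heq | hgt
    · exfalso
      have := pow_lt_one₀ (Complex.abs.nonneg ζ) hlt (show m ≠ 0 by omega)
      rw [hpow] at this; exact lt_irrefl 1 this
    · exact heq
    · exfalso
      have := one_lt_pow₀ hgt (show m ≠ 0 by omega)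
      rw [hpow] at this; exact lt_irrefl 1 this
  -- average representation
  have havg : ∀ z ∈ ball (0 : ℂ) 1,
      HasSum (fun k : ℕ => d (k * m) * (z ^ m) ^ k)
        ((m : ℂ)⁻¹ * ∑ j ∈ Finset.range m, φ (ζ ^ j * z)) := by
    intro z hz
    have hz1 : Complex.abs z < 1 := by rwa [mem_ball_zero_iff, Complex.norm_eq_abs] at hz
    have hmem : ∀ j : ℕ, ζ ^ j * z ∈ ball (0 : ℂ) 1 := by
      intro j
      rw [mem_ball_zero_iff, Complex.norm_eq_abs, map_mul, map_pow, hζ1, one_pow, one_mul]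
      exact hz1
    have h1 : ∀ j ∈ Finset.range m,
        HasSum (fun n : ℕ => (m : ℂ)⁻¹ * (d n * (ζ ^ j * z) ^ n)) ((m : ℂ)⁻¹ * φ (ζ ^ j * z)) :=
      fun j _ => (hs _ (hmem j)).mul_left _
    have h2 := hasSum_sum h1
    have hm0 : (m : ℂ) ≠ 0 := Nat.cast_ne_zero.mpr (by omega)
    have h3 : (fun n : ℕ => ∑ j ∈ Finset.range m, (m : ℂ)⁻¹ * (d n * (ζ ^ j * z) ^ n))
        = fun n : ℕ => if m ∣ n then d n * z ^ n else 0 := by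
      funext n
      have hterm : ∀ j : ℕ, (m : ℂ)⁻¹ * (d n * (ζ ^ j * z) ^ n)
          = (m : ℂ)⁻¹ * ((ζ ^ n) ^ j * (d n * z ^ n)) := by
        intro j
        rw [mul_pow, ← pow_mul, ← pow_mul, mul_comm j n]
        ring
      rw [Finset.sum_congr rfl (fun j _ => hterm j), ← Finset.mul_sum, ← Finset.sum_mul]
      by_cases hdvd : m ∣ n
      · rw [if_pos hdvd]
        have hζn : ζ ^ n = 1 := (hζ.pow_eq_one_iff_dvd n).2 hdvd
        simp [hζn, hm0]
      · rw [if_neg hdvd]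
        have hζn : ζ ^ n ≠ 1 := fun hcon => hdvd ((hζ.pow_eq_one_iff_dvd n).1 hcon)
        have hgeom : ∑ j ∈ Finset.range m, (ζ ^ n) ^ j = ((ζ ^ n) ^ m - 1) / (ζ ^ n - 1) :=
          geom_sum_eq hζn m
        have hζnm : (ζ ^ n) ^ m = 1 := by
          rw [← pow_mul, mul_comm n m, pow_mul, hζ.pow_eq_one, one_pow]
        rw [hgeom, hζnm]
        simp
    rw [h3] at h2
    have hinj : Function.Injective (fun k : ℕ => k * m) := fun x y hxy =>
      Nat.eq_of_mul_eq_mul_right (by omega) hxy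
    have h4 := (Function.Injective.hasSum_iff hinj (by
      intro n hn
      rw [Set.mem_range] at hn
      have hndvd : ¬ (m ∣ n) := by
        rintro ⟨t, ht⟩
        exact hn ⟨t, by rw [mul_comm]; exact ht.symm⟩
      simp only [if_neg hndvd])).2 h2
    have h5 : ((fun n : ℕ => if m ∣ n then d n * z ^ n else 0) ∘ fun k : ℕ => k * m)
        = fun k : ℕ => d (k * m) * (z ^ m) ^ k := by
      funext k
      simp only [Function.comp_apply]
      rw [if_pos ⟨k, mul_comm k m⟩, ← pow_mul, mul_comm m k]
    rw [h5] at h4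
    rw [Finset.mul_sum]
    exact h4
  -- existence and bound of sums for the subseries
  have hEx : ∀ w ∈ ball (0 : ℂ) 1, ∃ S, HasSum (fun k : ℕ => d (k * m) * w ^ k) S
      ∧ Complex.abs S ≤ 1 := by
    intro w hw
    have hw1 : Complex.abs w < 1 := by rwa [mem_ball_zero_iff, Complex.norm_eq_abs] at hw
    obtain ⟨z, hzm⟩ := Complex.isAlgClosed.exists_pow_nat_eq w (by omega : 0 < m)
    have hz1 : Complex.abs z < 1 := by
      by_contra hcon
      push_neg at hcon
      have : (1:ℝ) ≤ Complex.abs z ^ m := one_le_pow₀ hcon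
      rw [← map_pow, hzm] at this
      linarith
    have hz : z ∈ ball (0 : ℂ) 1 := by rwa [mem_ball_zero_iff, Complex.norm_eq_abs]
    have hS := havg z hz
    rw [hzm] at hS
    refine ⟨_, hS, ?_⟩
    have hmem : ∀ j : ℕ, ζ ^ j * z ∈ ball (0 : ℂ) 1 := by
      intro j
      rw [mem_ball_zero_iff, Complex.norm_eq_abs, map_mul, map_pow, hζ1, one_pow, one_mul]
      exact hz1
    have hsum : Complex.abs (∑ j ∈ Finset.range m, φ (ζ ^ j * z)) ≤ m := by
      calc Complex.abs (∑ j ∈ Finset.range m, φ (ζ ^ j * z))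
          ≤ ∑ j ∈ Finset.range m, Complex.abs (φ (ζ ^ j * z)) := by
            simpa [Complex.norm_eq_abs] using
              norm_sum_le (Finset.range m) (fun j => φ (ζ ^ j * z))
        _ ≤ ∑ _j ∈ Finset.range m, (1:ℝ) := by
            exact Finset.sum_le_sum (fun j _ => hb1 _ (hmem j))
        _ = m := by simp
    rw [map_mul, map_inv₀]
    have hmpos : (0:ℝ) < m := by positivity
    have habsm : Complex.abs (m : ℂ) = m := by
      rw [Complex.abs_natCast]
    rw [habsm]
    rw [inv_mul_le_iff₀ hmpos, mul_one]
    exact hsum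
  set e : ℕ → ℂ := fun k => d (k * m) with he
  have hBe : Bnd e := bnd_of_hasSum (fun w hw => ⟨_, (hEx w hw).choose_spec.1⟩)
  set χ : ℂ → ℂ := psum e with hχ
  have hχs : ∀ w ∈ ball (0 : ℂ) 1, HasSum (fun k : ℕ => e k * w ^ k) (χ w) :=
    fun w hw => psum_hasSum hBe hw
  have hχb : ∀ w ∈ ball (0 : ℂ) 1, Complex.abs (χ w) ≤ 1 := by
    intro w hw
    obtain ⟨S, hS, hS1⟩ := hEx w hw
    rwa [(hχs w hw).unique hS]
  have hχd : DifferentiableOn ℂ χ (ball (0 : ℂ) 1) := psum_diff hBe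
  have hSP := schwarz_pick χ hχd hχb
  have hχ0 : χ 0 = d 0 := by
    have h01 : HasSum (fun k : ℕ => e k * (0:ℂ) ^ k) (d 0) := by
      have := hasSum_single (f := fun k : ℕ => e k * (0:ℂ) ^ k) 0
        (fun b hb => by simp [zero_pow hb])
      simpa [he] using this
    exact (hχs 0 h0).unique h01
  have hχder : deriv χ 0 = d m := by
    have h02 := psum_deriv hBe h0
    have h03 : HasSum (fun k : ℕ => ((k:ℂ) + 1) * e (k + 1) * (0:ℂ) ^ k) (d m) := by
      have := hasSum_single (f := fun k : ℕ => ((k:ℂ) + 1) * e (k + 1) * (0:ℂ) ^ k) 0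
        (fun b hb => by simp [zero_pow hb])
      simpa [he] using this
    exact h02.unique h03
  rwa [hχ0, hχder] at hSP

end Stmt10Aux

theorem stmt_10 (h g : ℂ → ℂ) (a b : ℕ → ℂ) (K K' Λ₁ : ℝ)
    (hh : DifferentiableOn ℂ h (ball (0 : ℂ) 1))
    (hg : DifferentiableOn ℂ g (ball (0 : ℂ) 1))
    (ha0 : a 0 = 0) (hb0 : b 0 = 0)
    (hsa : ∀ z ∈ ball (0 : ℂ) 1, HasSum (fun n : ℕ => a n * z ^ n) (h z))
    (hsb : ∀ z ∈ ball (0 : ℂ) 1, HasSum (fun n : ℕ => b n * z ^ n) (g z))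
    (hKK' : 1 ≤ Real.sqrt (K + K'))
    (hΛ₁ : Real.sqrt (K + K') ≤ Λ₁)
    (h1 : 1 / Real.sqrt (K + K') ≤ |‖a 1‖ - ‖b 1‖|)
    (hbd : ∀ z ∈ ball (0 : ℂ) 1,
      ‖deriv h z‖ + ‖deriv g z‖ ≤ Λ₁) :
    ∀ n : ℕ, 2 ≤ n →
      ‖a n‖ + ‖b n‖ ≤
        ((K + K') * Λ₁ ^ 2 - 1) / (n * (K + K') * Λ₁) := by
  intro n hn
  simp only [Complex.norm_eq_abs] at h1 hbd ⊢
  have hs1 : (0:ℝ) < Real.sqrt (K + K') := lt_of_lt_of_le one_pos hKK'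
  have hK0 : 0 < K + K' := Real.sqrt_pos.mp hs1
  have hΛ1 : (1:ℝ) ≤ Λ₁ := hKK'.trans hΛ₁
  have hΛpos : (0:ℝ) < Λ₁ := lt_of_lt_of_le one_pos hΛ1
  obtain ⟨u, hu1, hual⟩ : ∃ u : ℂ, Complex.abs u = 1 ∧
      Complex.abs (a n + u * b n) = Complex.abs (a n) + Complex.abs (b n) := by
    by_cases hb' : b n = 0
    · exact ⟨1, by simp, by simp [hb']⟩
    by_cases ha' : a n = 0
    · exact ⟨1, by simp, by simp [ha']⟩
    have haA : Complex.abs (a n) ≠ 0 := by simpa using ha'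
    have hbA : Complex.abs (b n) ≠ 0 := by simpa using hb'
    set A : ℂ := ((Complex.abs (a n) : ℝ) : ℂ) with hAdef
    set B : ℂ := ((Complex.abs (b n) : ℝ) : ℂ) with hBdef
    have hA : A ≠ 0 := by
      rw [hAdef]; exact_mod_cast haA
    have hB : B ≠ 0 := by
      rw [hBdef]; exact_mod_cast hbA
    set sa : ℂ := a n / A with hsadef
    set sb : ℂ := b n / B with hsbdef
    have hsa1 : Complex.abs sa = 1 := by
      rw [hsadef, map_div₀, hAdef, Complex.abs_ofReal, _root_.abs_of_nonneg (Complex.abs.nonneg _)]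
      field_simp
    have hsb1 : Complex.abs sb = 1 := by
      rw [hsbdef, map_div₀, hBdef, Complex.abs_ofReal, _root_.abs_of_nonneg (Complex.abs.nonneg _)]
      field_simp
    have hsbsb : (starRingEnd ℂ) sb * sb = 1 := by
      rw [mul_comm, Complex.mul_conj, Complex.normSq_eq_abs, hsb1]
      norm_num
    have ha_eq : a n = A * sa := by
      rw [hsadef]; field_simp
    have hb_eq : b n = B * sb := by
      rw [hsbdef]; field_simp
    refine ⟨sa * (starRingEnd ℂ) sb, by rw [map_mul, Complex.abs_conj, hsa1, hsb1, mul_one], ?_⟩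
    have hkey : a n + sa * (starRingEnd ℂ) sb * b n = sa * (A + B) := by
      calc a n + sa * (starRingEnd ℂ) sb * b n
          = A * sa + sa * B * ((starRingEnd ℂ) sb * sb) := by
            conv_lhs => rw [ha_eq, hb_eq]
            ring
        _ = sa * (A + B) := by rw [hsbsb]; ring
    rw [hkey, map_mul, hsa1, one_mul]
    have hAB : A + B = ((Complex.abs (a n) + Complex.abs (b n) : ℝ) : ℂ) := by
      rw [hAdef, hBdef]; push_cast; ring
    rw [hAB, Complex.abs_ofReal, _root_.abs_of_nonneg (add_nonneg (Complex.abs.nonneg _) (Complex.abs.nonneg _))]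
  set c : ℕ → ℂ := fun k => a k + u * b k with hc
  set H : ℂ → ℂ := fun z => h z + u * g z with hH
  have hHsum : ∀ z ∈ ball (0:ℂ) 1, HasSum (fun k : ℕ => c k * z ^ k) (H z) := by
    intro z hz
    have hA := (hsa z hz).add ((hsb z hz).mul_left u)
    have heq : (fun k : ℕ => c k * z ^ k) = fun k : ℕ => a k * z ^ k + u * (b k * z ^ k) := by
      funext k; simp only [hc]; ring
    rw [heq]
    exact hA
  have hBc : Stmt10Aux.Bnd c := Stmt10Aux.bnd_of_hasSum (fun z hz => ⟨H z, hHsum z hz⟩)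
  have hEc : Set.EqOn (Stmt10Aux.psum c) H (ball (0:ℂ) 1) := fun z hz =>
    (Stmt10Aux.psum_hasSum hBc hz).unique (hHsum z hz)
  have hHd : ∀ z ∈ ball (0:ℂ) 1,
      HasSum (fun k : ℕ => ((k:ℂ)+1) * c (k+1) * z ^ k) (deriv H z) := by
    intro z hz
    have h1' := Stmt10Aux.psum_deriv hBc hz
    have h2 : deriv (Stmt10Aux.psum c) z = deriv H z :=
      Filter.EventuallyEq.deriv_eq (Filter.eventuallyEq_of_mem (isOpen_ball.mem_nhds hz) hEc)
    rwa [h2] at h1'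
  have hφb : ∀ z ∈ ball (0:ℂ) 1, Complex.abs (deriv H z / (Λ₁:ℂ)) ≤ 1 := by
    intro z hz
    have hhz : DifferentiableAt ℂ h z := hh.differentiableAt (isOpen_ball.mem_nhds hz)
    have hgz : DifferentiableAt ℂ g z := hg.differentiableAt (isOpen_ball.mem_nhds hz)
    have hder : deriv H z = deriv h z + u * deriv g z := by
      rw [hH]
      rw [deriv_fun_add hhz (hgz.const_mul u), deriv_const_mul u hgz]
    have habs : Complex.abs (deriv H z) ≤ Λ₁ := by
      rw [hder]
      calc Complex.abs (deriv h z + u * deriv g z)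
          ≤ Complex.abs (deriv h z) + Complex.abs (u * deriv g z) := Complex.abs.add_le _ _
        _ = Complex.abs (deriv h z) + Complex.abs (deriv g z) := by rw [map_mul, hu1, one_mul]
        _ ≤ Λ₁ := hbd z hz
    rw [map_div₀, Complex.abs_ofReal, _root_.abs_of_pos hΛpos, div_le_one hΛpos]
    exact habs
  set d : ℕ → ℂ := fun k => ((k:ℂ)+1) * c (k+1) / (Λ₁:ℂ) with hd
  have hφs : ∀ z ∈ ball (0:ℂ) 1, HasSum (fun k : ℕ => d k * z ^ k) (deriv H z / (Λ₁:ℂ)) := by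
    intro z hz
    have h1' := (hHd z hz).div_const (Λ₁:ℂ)
    have heq : (fun k : ℕ => ((k:ℂ)+1) * c (k+1) * z ^ k / (Λ₁:ℂ))
        = fun k : ℕ => d k * z ^ k := by
      funext k; simp only [hd]; ring
    rwa [heq] at h1'
  have hW := Stmt10Aux.wiener (fun z => deriv H z / (Λ₁:ℂ)) d (n-1) (by omega) hφs hφb
  have hd0 : Complex.abs (d 0) = Complex.abs (c 1) / Λ₁ := by
    have hde : d 0 = c 1 / (Λ₁:ℂ) := by simp [hd]
    rw [hde, map_div₀, Complex.abs_ofReal, _root_.abs_of_pos hΛpos]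
  have hdn : Complex.abs (d (n-1)) = n * (Complex.abs (a n) + Complex.abs (b n)) / Λ₁ := by
    have h2' : (n-1)+1 = n := by omega
    have h1' : ((n-1 : ℕ):ℂ) + 1 = (n:ℂ) := by
      rw [← h2']; push_cast; ring
    have hde : d (n-1) = (n:ℂ) * c n / (Λ₁:ℂ) := by
      simp only [hd, h2', h1']
    rw [hde, map_div₀, map_mul, Complex.abs_natCast, Complex.abs_ofReal,
      _root_.abs_of_pos hΛpos]
    have : Complex.abs (c n) = Complex.abs (a n) + Complex.abs (b n) := by
      rw [show c n = a n + u * b n from rfl]; exact hual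
    rw [this]
  have hc1 : 1 / Real.sqrt (K + K') ≤ Complex.abs (c 1) := by
    have e1 : Complex.abs (a 1) ≤ Complex.abs (c 1) + Complex.abs (b 1) := by
      have heq : a 1 = c 1 - u * b 1 := by simp only [hc]; ring
      rw [heq]
      have := norm_sub_le (c 1) (u * b 1)
      simpa [Complex.norm_eq_abs, map_mul, hu1] using this
    have e2 : Complex.abs (b 1) ≤ Complex.abs (c 1) + Complex.abs (a 1) := by
      have heq : u * b 1 = c 1 - a 1 := by simp only [hc]; ring
      have h3 : Complex.abs (u * b 1) = Complex.abs (b 1) := by rw [map_mul, hu1, one_mul]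
      rw [← h3, heq]
      have := norm_sub_le (c 1) (a 1)
      simpa [Complex.norm_eq_abs] using this
    have habs : |Complex.abs (a 1) - Complex.abs (b 1)| ≤ Complex.abs (c 1) :=
      abs_sub_le_iff.2 ⟨by linarith, by linarith⟩
    linarith [h1]
  -- final computation
  set X : ℝ := Complex.abs (a n) + Complex.abs (b n) with hX
  set S : ℝ := K + K' with hSdef
  have hX0 : (0:ℝ) ≤ X := add_nonneg (Complex.abs.nonneg _) (Complex.abs.nonneg _)
  rw [hdn, hd0] at hW
  have habs_c1 : (1/Real.sqrt S)/Λ₁ ≤ Complex.abs (c 1)/Λ₁ := by gcongr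
  have ht0 : (0:ℝ) ≤ (1/Real.sqrt S)/Λ₁ := by positivity
  have hsq : ((1/Real.sqrt S)/Λ₁)^2 = 1/(S*Λ₁^2) := by
    rw [div_pow, div_pow, one_pow, Real.sq_sqrt hK0.le, div_div]
  have hsq_le : 1/(S*Λ₁^2) ≤ (Complex.abs (c 1)/Λ₁)^2 := by
    rw [← hsq]
    exact pow_le_pow_left₀ ht0 habs_c1 2
  have hfin : (n:ℝ) * X / Λ₁ ≤ 1 - 1/(S*Λ₁^2) := le_trans hW (by linarith)
  rw [div_le_iff₀ hΛpos] at hfin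
  have hkey : ((1 - 1/(S*Λ₁^2)) * Λ₁) * (S*Λ₁) = S*Λ₁^2 - 1 := by
    field_simp
  have hSΛ : (0:ℝ) < S * Λ₁ := by positivity
  rw [le_div_iff₀ (by positivity : (0:ℝ) < (n:ℝ) * S * Λ₁)]
  calc X * ((n:ℝ) * S * Λ₁) = ((n:ℝ) * X) * (S * Λ₁) := by ring
    _ ≤ ((1 - 1/(S*Λ₁^2)) * Λ₁) * (S*Λ₁) := mul_le_mul_of_nonneg_right hfin hSΛ.le
    _ = S*Λ₁^2 - 1 := hkey
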